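/- The eigenvalues of the N×N matrix J^{BR} with entries J_{nn} = β_n(λ_n − τ_n)/(λ_n(1+β_n)) and J_{ik} = −β_i τ_k/(λ_i(1+β_i)) for i ≠ k are exactly the roots of the equation [Σ_{n=1}^N τ_n/(λ_n(1 − ((1+β_n)/β_n)ξ)) − 1]·Π_{n=1}^N (ξ − β_n/(1+β_n)) = 0; i.e., the characteristic polynomial det(ξI − J^{BR}) equals this expression. -/

import Mathlib

open Finset Matrix

/-- The eigenvalues of the best-response Jacobian `J^{BR}` are exactly the
roots of `[Σ_n τ_n/(λ_n(1 − ((1+β_n)/β_n)ξ)) − 1]·Π_n (ξ − β_n/(1+β_n)) = 0`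
(away from the poles of the sum). -/
theorem charpoly_JBR (N : ℕ) (hN : 1 ≤ N)
    (β τ lam : Fin N → ℝ)
    (hβ : ∀ n, 0 < β n) (hτ : ∀ n, 0 < τ n) (hlam : ∀ n, 0 < lam n)
    (J : Matrix (Fin N) (Fin N) ℝ)
    (hJ : ∀ i k, J i k = if i = k then β i * (lam i - τ i) / (lam i * (1 + β i))
        else -(β i * τ k / (lam i * (1 + β i)))) :
    ∀ ξ : ℝ, (∀ n, ξ ≠ β n / (1 + β n)) →
      (Matrix.det (ξ • (1 : Matrix (Fin N) (Fin N) ℝ) - J) = 0 ↔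
        ((∑ n, τ n / (lam n * (1 - (1 + β n) / β n * ξ))) - 1)
            * ∏ n, (ξ - β n / (1 + β n)) = 0) := by
  intro ξ hξ
  set d : Fin N → ℝ := fun n => ξ - β n / (1 + β n) with hd
  have hβ1 : ∀ n, (1 : ℝ) + β n ≠ 0 := fun n => by have := hβ n; positivity
  have hlam' : ∀ n, lam n ≠ 0 := fun n => (hlam n).ne'
  have hdne : ∀ n, d n ≠ 0 := fun n => sub_ne_zero.mpr (hξ n)
  set u : Fin N → ℝ := fun n => β n / (lam n * (1 + β n)) with hu
  set A : Matrix (Fin N) (Fin N) ℝ := Matrix.diagonal d with hA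
  have hsplit : ξ • (1 : Matrix (Fin N) (Fin N) ℝ) - J
      = A + Matrix.replicateCol (Fin 1) u * Matrix.replicateRow (Fin 1) τ := by
    ext i k
    simp only [Matrix.add_apply, Matrix.sub_apply, Matrix.smul_apply, Matrix.one_apply,
      Matrix.mul_apply, Matrix.replicateCol_apply, Matrix.replicateRow_apply, Finset.sum_const,
      Finset.card_univ, Fintype.card_fin, one_smul, hA, Matrix.diagonal_apply, hJ, hu, hd]
    by_cases h : i = k
    · subst h
      simp only [if_pos rfl, if_true]
      have h1 := hβ1 i
      have h2 := hlam' i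
      field_simp
      ring
    · simp only [if_neg h, if_neg (fun hh => h hh)]
      simp
      ring
  have hdetA : A.det = ∏ n, d n := by simp [hA]
  have hdetAne : A.det ≠ 0 := by
    rw [hdetA]; exact Finset.prod_ne_zero_iff.mpr fun n _ => hdne n
  have hinv : A⁻¹ = Matrix.diagonal (fun n => (d n)⁻¹) := by
    apply Matrix.inv_eq_right_inv
    rw [hA, Matrix.diagonal_mul_diagonal]
    rw [show (fun n => d n * (d n)⁻¹) = fun _ => (1 : ℝ) from funext fun n => mul_inv_cancel₀ (hdne n)]
    exact Matrix.diagonal_one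
  have hmain : (ξ • (1 : Matrix (Fin N) (Fin N) ℝ) - J).det
      = (∏ n, d n) * (1 + ∑ n, τ n * ((d n)⁻¹ * u n)) := by
    rw [hsplit, Matrix.det_add_mul _ _ (isUnit_iff_ne_zero.mpr hdetAne), hdetA]
    congr 1
    simp [Matrix.det_fin_one, Matrix.mul_apply, hinv, Matrix.diagonal_apply, ite_mul,
      Finset.mul_sum, mul_assoc]
  clear_value d u
  have hsum : (∑ n, τ n / (lam n * (1 - (1 + β n) / β n * ξ)))
      = -∑ n, τ n * ((d n)⁻¹ * u n) := by
    rw [← Finset.sum_neg_distrib]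
    apply Finset.sum_congr rfl
    intro n _
    have hb := (hβ n).ne'
    have h1 : lam n * (1 - (1 + β n) / β n * ξ) = -(lam n * (1 + β n) / β n) * d n := by
      simp only [hd]
      field_simp [hβ1 n]
      ring
    rw [h1, hu]
    field_simp [hdne n, hβ1 n]
  rw [hmain, hsum]
  constructor
  · intro h
    have : ((-∑ n, τ n * ((d n)⁻¹ * u n)) - 1) * ∏ n, d n
        = -((∏ n, d n) * (1 + ∑ n, τ n * ((d n)⁻¹ * u n))) := by ring
    rw [this, h, neg_zero]
  · intro h
    have : (∏ n, d n) * (1 + ∑ n, τ n * ((d n)⁻¹ * u n))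
        = -(((-∑ n, τ n * ((d n)⁻¹ * u n)) - 1) * ∏ n, d n) := by ring
    rw [this, h, neg_zero]
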